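/- Let K : Ω × Ω → ℝ be a symmetric positive semidefinite kernel on a compact Ω ⊂ ℝᵈ satisfying |K(x,x) − K(x,y)| ≤ L‖x−y‖ for all x,y ∈ Ω. Let Zₙ = {z₁,…,zₙ} be the pivots of the pivoted Cholesky algorithm and Rₙ the residual after n steps. Then sup_{x,y∈Ω} |Rₙ(x,y)| ≤ 4L · h_{Zₙ}, where h_{Zₙ} = sup_{x∈Ω} min_{z∈Zₙ} ‖x−z‖ is the fill distance of the pivot set. -/

import Mathlib

/-- A kernel `K` on a set `Ω` is symmetric positive semidefinite if it is symmetric on `Ω`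
and every finite kernel matrix formed from points of `Ω` is positive semidefinite. -/
def IsPSDKernel {E : Type*} (Ω : Set E) (K : E → E → ℝ) : Prop :=
  (∀ x ∈ Ω, ∀ y ∈ Ω, K x y = K y x) ∧
  ∀ (n : ℕ) (p : Fin n → E), (∀ i, p i ∈ Ω) →
    ∀ c : Fin n → ℝ, 0 ≤ ∑ i, ∑ j, c i * c j * K (p i) (p j)

/-- One pivoted Cholesky step at pivot `z`. -/
noncomputable def cholStep {E : Type*} (R : E → E → ℝ) (z : E) : E → E → ℝ :=
  fun x y => R x y - R x z * R z y / R z z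

/-- The residual of the pivoted Cholesky algorithm after successively pivoting at the
points of the list `zs` (in order). -/
noncomputable def cholResid {E : Type*} (K : E → E → ℝ) (zs : List E) : E → E → ℝ :=
  zs.foldl cholStep K

/-- The fill distance `h_Z = sup_{x ∈ Ω} min_{i} ‖x - zᵢ‖` of the points `z` in `Ω`. -/
noncomputable def fillDistance {d n : ℕ} (Ω : Set (EuclideanSpace ℝ (Fin d)))
    (z : Fin n → EuclideanSpace ℝ (Fin d)) : ℝ :=
  ⨆ x : Ω, ⨅ i : Fin n, ‖(x : EuclideanSpace ℝ (Fin d)) - z i‖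

namespace CholAux

variable {E : Type*}

structure Inv (Ω : Set E) (K R : E → E → ℝ) : Prop where
  symm : ∀ x ∈ Ω, ∀ y ∈ Ω, R x y = R y x
  psd : ∀ (m : ℕ) (p : Fin m → E), (∀ i, p i ∈ Ω) → ∀ c : Fin m → ℝ,
      0 ≤ ∑ i, ∑ j, c i * c j * R (p i) (p j)
  mono : ∀ (m : ℕ) (p : Fin m → E), (∀ i, p i ∈ Ω) → ∀ c : Fin m → ℝ,
      ∑ i, ∑ j, c i * c j * R (p i) (p j) ≤ ∑ i, ∑ j, c i * c j * K (p i) (p j)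

lemma quad_step (Ω : Set E) (R : E → E → ℝ)
    (hsym : ∀ x ∈ Ω, ∀ y ∈ Ω, R x y = R y x)
    {z : E} (hz : z ∈ Ω) (m : ℕ) (p : Fin m → E) (hp : ∀ i, p i ∈ Ω)
    (c : Fin m → ℝ) :
    ∑ i, ∑ j, c i * c j * cholStep R z (p i) (p j)
      = (∑ i, ∑ j, c i * c j * R (p i) (p j))
        - (∑ i, c i * R (p i) z) ^ 2 / R z z := by
  have h1 : ∀ i j : Fin m, c i * c j * cholStep R z (p i) (p j)
      = c i * c j * R (p i) (p j)
        - (c i * R (p i) z) * (c j * R (p j) z) / R z z := by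
    intro i j
    have h := hsym z hz (p j) (hp j)
    simp only [cholStep]
    rw [h]
    ring
  have h2 : ∑ i, ∑ j, (c i * R (p i) z) * (c j * R (p j) z) / R z z
      = (∑ i, c i * R (p i) z) ^ 2 / R z z := by
    rw [sq, Finset.sum_mul_sum, Finset.sum_div]
    congr 1
    ext i
    rw [Finset.sum_div]
  simp only [h1, Finset.sum_sub_distrib, h2]

/-- The key Schur-complement nonnegativity: the reduced quadratic form is still ≥ 0. -/
lemma quad_step_nonneg (Ω : Set E) (K R : E → E → ℝ) (hI : Inv Ω K R)
    {z : E} (hz : z ∈ Ω) (hzz : 0 < R z z) (m : ℕ) (p : Fin m → E)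
    (hp : ∀ i, p i ∈ Ω) (c : Fin m → ℝ) :
    0 ≤ (∑ i, ∑ j, c i * c j * R (p i) (p j))
        - (∑ i, c i * R (p i) z) ^ 2 / R z z := by
  set s : ℝ := ∑ i, c i * R (p i) z with hs
  set t : ℝ := -(s / R z z) with ht
  set q : Fin (m + 1) → E := Fin.snoc p z with hq
  set b : Fin (m + 1) → ℝ := Fin.snoc c t with hb
  have hp' : ∀ i : Fin (m + 1), q i ∈ Ω := by
    intro i
    refine Fin.lastCases ?_ ?_ i
    · simpa [hq] using hz
    · intro i; simpa [hq] using hp i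
  have h0 := hI.psd (m + 1) q hp' b
  have hsymj : ∀ j : Fin m, R z (p j) = R (p j) z :=
    fun j => hI.symm z hz (p j) (hp j)
  have e1 : ∀ i : Fin m, c i * t * R (p i) z = t * (c i * R (p i) z) :=
    fun i => by ring
  have e2 : ∀ j : Fin m, t * c j * R z (p j) = t * (c j * R (p j) z) := by
    intro j; rw [hsymj j]; ring
  have hexp : ∑ i, ∑ j, b i * b j * R (q i) (q j)
      = (∑ i, ∑ j, c i * c j * R (p i) (p j)) + t * s + (t * s + t * t * R z z) := by
    simp only [hq, hb, Fin.sum_univ_castSucc, Fin.snoc_castSucc, Fin.snoc_last, e1, e2,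
      Finset.sum_add_distrib, ← Finset.mul_sum, ← hs]
  have ha : t * s = -(s ^ 2 / R z z) := by rw [ht]; ring
  have hbb : t * t * R z z = s ^ 2 / R z z := by
    rw [ht]; field_simp
  rw [hexp, ha, hbb] at h0
  linarith

lemma inv_step (Ω : Set E) (K R : E → E → ℝ) (hI : Inv Ω K R)
    {z : E} (hz : z ∈ Ω) (hzz : 0 < R z z) : Inv Ω K (cholStep R z) := by
  constructor
  · intro x hx y hy
    simp only [cholStep]
    rw [hI.symm x hx y hy, hI.symm x hx z hz, hI.symm z hz y hy]
    ring
  · intro m p hp c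
    rw [quad_step Ω R hI.symm hz m p hp c]
    exact quad_step_nonneg Ω K R hI hz hzz m p hp c
  · intro m p hp c
    rw [quad_step Ω R hI.symm hz m p hp c]
    have h1 : 0 ≤ (∑ i, c i * R (p i) z) ^ 2 / R z z :=
      div_nonneg (sq_nonneg _) hzz.le
    have := hI.mono m p hp c
    linarith

def ZeroAt (R : E → E → ℝ) (w : E) : Prop :=
  (∀ y, R w y = 0) ∧ (∀ y, R y w = 0)

lemma zeroAt_step_self (R : E → E → ℝ) {z : E} (hzz : R z z ≠ 0) :
    ZeroAt (cholStep R z) z := by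
  constructor
  · intro y; simp only [cholStep]; field_simp; ring
  · intro y; simp only [cholStep]; field_simp; ring

lemma zeroAt_step_mono (R : E → E → ℝ) (z : E) {w : E} (hw : ZeroAt R w) :
    ZeroAt (cholStep R z) w := by
  constructor
  · intro y; simp [cholStep, hw.1 y, hw.1 z]
  · intro y; simp [cholStep, hw.2 y, hw.2 z]


def WD (R : E → E → ℝ) : List E → Prop
  | [] => True
  | z :: zs => 0 < R z z ∧ WD (cholStep R z) zs

lemma zeroAt_resid : ∀ (zs : List E) (R : E → E → ℝ) {w : E},
    ZeroAt R w → ZeroAt (cholResid R zs) w := by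
  intro zs
  induction zs with
  | nil => intro R w hw; exact hw
  | cons a l ih =>
      intro R w hw
      exact ih (cholStep R a) (zeroAt_step_mono R a hw)

lemma main_invariant (Ω : Set E) (K : E → E → ℝ) :
    ∀ (zs : List E) (R : E → E → ℝ), Inv Ω K R → (∀ w ∈ zs, w ∈ Ω) → WD R zs →
      Inv Ω K (cholResid R zs) ∧ ∀ w ∈ zs, ZeroAt (cholResid R zs) w := by
  intro zs
  induction zs with
  | nil => intro R hI _ _; exact ⟨hI, by simp⟩
  | cons a l ih =>
      intro R hI hmem hwd
      have ha : a ∈ Ω := hmem a (by simp)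
      have hI' : Inv Ω K (cholStep R a) := inv_step Ω K R hI ha hwd.1
      have hmem' : ∀ w ∈ l, w ∈ Ω := fun w hw => hmem w (by simp [hw])
      obtain ⟨h1, h2⟩ := ih (cholStep R a) hI' hmem' hwd.2
      refine ⟨h1, ?_⟩
      intro w hw
      rcases List.mem_cons.mp hw with h | h
      · exact h ▸ zeroAt_resid l (cholStep R a) (zeroAt_step_self R hwd.1.ne')
      · exact h2 w h

lemma wd_of_take : ∀ (l : List E) (R : E → E → ℝ),
    (∀ k : Fin l.length, 0 < cholResid R (l.take k) (l.get k) (l.get k)) → WD R l := by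
  intro l
  induction l with
  | nil => intro R _; trivial
  | cons a l ih =>
      intro R h
      constructor
      · simpa [cholResid] using h ⟨0, by simp⟩
      · apply ih (cholStep R a)
        intro k
        simpa [cholResid, List.take_succ_cons] using h k.succ

end CholAux

theorem residual_le_fillDistance {d n : ℕ} (hn : 0 < n)
    (Ω : Set (EuclideanSpace ℝ (Fin d))) (hΩ : IsCompact Ω) (hΩne : Ω.Nonempty)
    (K : EuclideanSpace ℝ (Fin d) → EuclideanSpace ℝ (Fin d) → ℝ)
    (hK : IsPSDKernel Ω K) (L : ℝ) (hL : 0 < L)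
    (hLip : ∀ x ∈ Ω, ∀ y ∈ Ω, |K x x - K x y| ≤ L * ‖x - y‖)
    (z : Fin n → EuclideanSpace ℝ (Fin d)) (hzΩ : ∀ i, z i ∈ Ω)
    (hwd : ∀ k : Fin n,
      0 < cholResid K ((List.ofFn z).take k) (z k) (z k)) :
    ∀ x ∈ Ω, ∀ y ∈ Ω,
      |cholResid K (List.ofFn z) x y| ≤ 4 * L * fillDistance Ω z := by
  classical
  have hne : Nonempty (Fin n) := ⟨⟨0, hn⟩⟩
  set l : List (EuclideanSpace ℝ (Fin d)) := List.ofFn z with hl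
  have hmem : ∀ w ∈ l, w ∈ Ω := by
    intro w hw
    rw [hl, List.mem_ofFn] at hw
    obtain ⟨i, rfl⟩ := hw
    exact hzΩ i
  have hIK : CholAux.Inv Ω K K := ⟨hK.1, hK.2, fun m p hp c => le_refl _⟩
  have hwd' : ∀ k : Fin l.length,
      0 < cholResid K (l.take k) (l.get k) (l.get k) := by
    intro k
    have hk := hwd (Fin.cast (List.length_ofFn (f := z)) k)
    have hget : l.get k = z (Fin.cast (List.length_ofFn (f := z)) k) := by
      exact List.get_ofFn z k
    have htake : ((Fin.cast (List.length_ofFn (f := z)) k : Fin n) : ℕ) = (k : ℕ) := rfl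
    rw [hget]
    simpa [htake] using hk
  obtain ⟨hInv, hZero⟩ := CholAux.main_invariant Ω K l K hIK hmem
    (CholAux.wd_of_take l K hwd')
  set R : EuclideanSpace ℝ (Fin d) → EuclideanSpace ℝ (Fin d) → ℝ := cholResid K l with hR
  have hZ : ∀ i : Fin n, CholAux.ZeroAt R (z i) := by
    intro i
    exact hZero (z i) (by rw [hl, List.mem_ofFn]; exact ⟨i, rfl⟩)
  -- boundedness facts for the fill distance
  obtain ⟨C, hC⟩ := hΩ.isBounded.exists_norm_le
  have hbdd : BddAbove (Set.range fun x : Ω => ⨅ i : Fin n,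
      ‖(x : EuclideanSpace ℝ (Fin d)) - z i‖) := by
    refine ⟨C + ‖z ⟨0, hn⟩‖, ?_⟩
    rintro _ ⟨x, rfl⟩
    calc (⨅ i : Fin n, ‖(x : EuclideanSpace ℝ (Fin d)) - z i‖)
        ≤ ‖(x : EuclideanSpace ℝ (Fin d)) - z ⟨0, hn⟩‖ :=
          ciInf_le ⟨0, by rintro _ ⟨i, rfl⟩; exact norm_nonneg _⟩ _
      _ ≤ ‖(x : EuclideanSpace ℝ (Fin d))‖ + ‖z ⟨0, hn⟩‖ := norm_sub_le _ _
      _ ≤ C + ‖z ⟨0, hn⟩‖ := by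
          have := hC x x.2
          linarith
  have hfill : ∀ x ∈ Ω,
      (⨅ i : Fin n, ‖x - z i‖) ≤ fillDistance Ω z := by
    intro x hx
    exact le_ciSup hbdd (⟨x, hx⟩ : Ω)
  have hg0 : ∀ x : EuclideanSpace ℝ (Fin d), 0 ≤ ⨅ i : Fin n, ‖x - z i‖ :=
    fun x => le_ciInf fun i => norm_nonneg _
  have hfill0 : 0 ≤ fillDistance Ω z := by
    obtain ⟨x₀, hx₀⟩ := hΩne
    exact le_trans (hg0 x₀) (hfill x₀ hx₀)
  set h : ℝ := fillDistance Ω z with hh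
  have h2L : (0:ℝ) < 2 * L := by linarith
  -- diagonal bound
  have hdiag : ∀ x ∈ Ω, R x x ≤ 2 * L * h := by
    intro x hx
    have hxi : ∀ i : Fin n, R x x ≤ 2 * L * ‖x - z i‖ := by
      intro i
      have hpmem : ∀ j : Fin 2, (![x, z i] : Fin 2 → EuclideanSpace ℝ (Fin d)) j ∈ Ω := by
        intro j
        fin_cases j
        · exact hx
        · exact hzΩ i
      have hq := hInv.mono 2 ![x, z i] hpmem ![(1:ℝ), -1]
      simp only [Fin.sum_univ_two, Matrix.cons_val_zero, Matrix.cons_val_one,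
        Matrix.head_cons] at hq
      have hz1 : R x (z i) = 0 := (hZ i).2 x
      have hz2 : R (z i) x = 0 := (hZ i).1 x
      have hz3 : R (z i) (z i) = 0 := (hZ i).1 (z i)
      rw [hz1, hz2, hz3] at hq
      have hL1 : |K x x - K x (z i)| ≤ L * ‖x - z i‖ := hLip x hx (z i) (hzΩ i)
      have hL2 : |K (z i) (z i) - K (z i) x| ≤ L * ‖z i - x‖ :=
        hLip (z i) (hzΩ i) x hx
      rw [norm_sub_rev] at hL2
      have h1 := abs_le.mp hL1
      have h2 := abs_le.mp hL2
      have := hq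
      nlinarith [h1.2, h2.2]
    have hdivle : R x x / (2 * L) ≤ ⨅ i : Fin n, ‖x - z i‖ := by
      refine le_ciInf fun i => ?_
      rw [div_le_iff₀ h2L]
      have := hxi i
      linarith [hxi i]
    have := le_trans hdivle (hfill x hx)
    rw [div_le_iff₀ h2L] at this
    linarith
  have hRnn : ∀ x ∈ Ω, 0 ≤ R x x := by
    intro x hx
    have := hInv.psd 1 ![x] (by intro j; fin_cases j; exact hx) ![(1:ℝ)]
    simpa [Fin.sum_univ_one] using this
  -- Cauchy-Schwarz for the residual kernel
  have hCS : ∀ x ∈ Ω, ∀ y ∈ Ω, (R x y) ^ 2 ≤ R x x * R y y := by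
    intro x hx y hy
    have hquad : ∀ t : ℝ,
        0 ≤ R x x * (t * t) + (2 * R x y) * t + R y y := by
      intro t
      have hpmem : ∀ j : Fin 2, (![x, y] : Fin 2 → EuclideanSpace ℝ (Fin d)) j ∈ Ω := by
        intro j; fin_cases j; exacts [hx, hy]
      have hq := hInv.psd 2 ![x, y] hpmem ![t, (1:ℝ)]
      simp only [Fin.sum_univ_two, Matrix.cons_val_zero, Matrix.cons_val_one,
        Matrix.head_cons] at hq
      have hs := hInv.symm y hy x hx
      rw [hs] at hq
      linarith [hq]
    have hd := discrim_le_zero hquad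
    rw [discrim] at hd
    nlinarith
  intro x hx y hy
  have h1 : (R x y) ^ 2 ≤ (2 * L * h) ^ 2 := by
    calc (R x y) ^ 2 ≤ R x x * R y y := hCS x hx y hy
      _ ≤ (2 * L * h) ^ 2 := by
          have := hdiag x hx
          have := hdiag y hy
          have := hRnn x hx
          have := hRnn y hy
          nlinarith
  have h2Lh : 0 ≤ 2 * L * h := by positivity
  have habs : |R x y| ≤ 2 * L * h := by
    have h2 := Real.sqrt_le_sqrt h1
    rwa [Real.sqrt_sq_eq_abs, Real.sqrt_sq h2Lh] at h2
  have : 2 * L * h ≤ 4 * L * h := by nlinarith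
  linarith [habs]
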